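/- Let X be a compact ordered space and let x, y ∈ X with ¬(x ≤ y). Then there exists a continuous monotone function f : X → [0,1] (the unit interval with its usual order and topology) such that f x = 1 and f y = 0. -/

import Mathlib

open Set Function

namespace NachbinAux

variable {X : Type*} [TopologicalSpace X] [CompactSpace X] [PartialOrder X]
  [OrderClosedTopology X]

lemma isClosed_lowerClosure_of_isClosed {K : Set X} (hK : IsClosed K) :
    IsClosed (↑(lowerClosure K) : Set X) := by
  have hset : (↑(lowerClosure K) : Set X) =
      Prod.fst '' ({p : X × X | p.1 ≤ p.2} ∩ univ ×ˢ K) := by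
    ext z
    simp only [lowerClosure, mem_image, mem_inter_iff, mem_setOf_eq, mem_prod, mem_univ,
      true_and, LowerSet.mem_mk, coe_setOf, mem_setOf_eq]
    constructor
    · rintro ⟨k, hk, hzk⟩; exact ⟨(z, k), ⟨hzk, hk⟩, rfl⟩
    · rintro ⟨⟨a, b⟩, ⟨hab, hb⟩, rfl⟩; exact ⟨b, hb, hab⟩
  rw [hset]
  have hcpt : IsCompact ({p : X × X | p.1 ≤ p.2} ∩ univ ×ˢ K) :=
    ((OrderClosedTopology.isClosed_le').inter (isClosed_univ.prod hK)).isCompact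
  exact (hcpt.image continuous_fst).isClosed

lemma isClosed_upperClosure_of_isClosed {K : Set X} (hK : IsClosed K) :
    IsClosed (↑(upperClosure K) : Set X) := by
  have hset : (↑(upperClosure K) : Set X) =
      Prod.snd '' ({p : X × X | p.1 ≤ p.2} ∩ K ×ˢ univ) := by
    ext z
    simp only [upperClosure, mem_image, mem_inter_iff, mem_setOf_eq, mem_prod, mem_univ,
      and_true, UpperSet.mem_mk, coe_setOf, mem_setOf_eq]
    constructor
    · rintro ⟨k, hk, hkz⟩; exact ⟨(k, z), ⟨hkz, hk⟩, rfl⟩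
    · rintro ⟨⟨a, b⟩, ⟨hab, ha⟩, rfl⟩; exact ⟨a, ha, hab⟩
  rw [hset]
  have hcpt : IsCompact ({p : X × X | p.1 ≤ p.2} ∩ K ×ˢ univ) :=
    ((OrderClosedTopology.isClosed_le').inter (hK.prod isClosed_univ)).isCompact
  exact (hcpt.image continuous_snd).isClosed

/-- Nachbin separation of a closed upper set from a disjoint closed lower set. -/
lemma sep_upper_lower {A B : Set X} (hA : IsClosed A) (hAu : IsUpperSet A)
    (hB : IsClosed B) (hBl : IsLowerSet B) (hd : Disjoint A B) :
    ∃ U V : Set X, IsOpen U ∧ IsUpperSet U ∧ IsOpen V ∧ IsLowerSet V ∧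
      A ⊆ U ∧ B ⊆ V ∧ Disjoint U V := by
  -- A ×ˢ B avoids the order graph
  have hsub : A ×ˢ B ⊆ {p : X × X | p.1 ≤ p.2}ᶜ := by
    rintro ⟨a, b⟩ ⟨ha, hb⟩ hab
    exact (hd.le_bot ⟨ha, hBl hab hb⟩ : a ∈ (⊥ : Set X)).elim
  obtain ⟨M, N, hMo, hNo, hAM, hBN, hMN⟩ :=
    generalized_tube_lemma hA.isCompact hB.isCompact
      (isOpen_compl_iff.2 OrderClosedTopology.isClosed_le') hsub
  have key : ∀ m ∈ M, ∀ n ∈ N, ¬ m ≤ n := fun m hm n hn hle =>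
    hMN (show (m, n) ∈ M ×ˢ N from ⟨hm, hn⟩) hle
  refine ⟨(↑(lowerClosure Mᶜ))ᶜ, (↑(upperClosure Nᶜ))ᶜ, ?_, ?_, ?_, ?_, ?_, ?_, ?_⟩
  · exact (isClosed_lowerClosure_of_isClosed hMo.isClosed_compl).isOpen_compl
  · exact (lowerClosure Mᶜ).lower.compl
  · exact (isClosed_upperClosure_of_isClosed hNo.isClosed_compl).isOpen_compl
  · exact (upperClosure Nᶜ).upper.compl
  · intro a ha hmem
    obtain ⟨m, hm, ham⟩ := hmem
    exact hm (hAM (hAu ham ha))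
  · intro b hb hmem
    obtain ⟨n, hn, hnb⟩ := hmem
    exact hn (hBN (hBl hnb hb))
  · refine Set.disjoint_left.2 fun z hzU hzV => ?_
    have hzM : z ∈ M := by
      by_contra hzm
      exact hzU (subset_lowerClosure hzm)
    have hzN : z ∈ N := by
      by_contra hzn
      exact hzV (subset_upperClosure hzn)
    exact key z hzM z hzN le_rfl

/-- The monotone insertion lemma used in the Urysohn-type recursion. -/
lemma insertion {c u : Set X} (hc : IsClosed c) (hcl : IsLowerSet c) (hu : IsOpen u)
    (hul : IsLowerSet u) (hcu : c ⊆ u) :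
    ∃ v k : Set X, IsOpen v ∧ IsLowerSet v ∧ IsClosed k ∧ IsLowerSet k ∧
      c ⊆ v ∧ v ⊆ k ∧ k ⊆ u := by
  have hd : Disjoint uᶜ c := Set.disjoint_left.2 fun z hz hz' => hz (hcu hz')
  obtain ⟨U, V, hUo, hUu, hVo, hVl, hBU, hcV, hUV⟩ :=
    sep_upper_lower hu.isClosed_compl hul.compl hc hcl hd
  refine ⟨V, Uᶜ, hVo, hVl, hUo.isClosed_compl, hUu.compl, hcV, ?_, ?_⟩
  · exact fun z hz hzU => (Set.disjoint_left.1 hUV) hzU hz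
  · intro z hz
    by_contra hzu
    exact hz (hBU hzu)

/-- Ordered analogue of `Urysohns.CU`: a closed lower set `C` inside an open lower set `U`. -/
structure MCU (X : Type*) [TopologicalSpace X] [CompactSpace X] [PartialOrder X]
    [OrderClosedTopology X] where
  protected C : Set X
  protected U : Set X
  protected closed_C : IsClosed C
  protected lower_C : IsLowerSet C
  protected open_U : IsOpen U
  protected lower_U : IsLowerSet U
  protected subset : C ⊆ U

namespace MCU

noncomputable def spec (c : MCU X) :=
  insertion c.closed_C c.lower_C c.open_U c.lower_U c.subset

/-- midpoint open lower set -/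
noncomputable def V (c : MCU X) : Set X := c.spec.choose

/-- midpoint closed lower set -/
noncomputable def K (c : MCU X) : Set X := c.spec.choose_spec.choose

lemma V_open (c : MCU X) : IsOpen c.V := c.spec.choose_spec.choose_spec.1
lemma V_lower (c : MCU X) : IsLowerSet c.V := c.spec.choose_spec.choose_spec.2.1
lemma K_closed (c : MCU X) : IsClosed c.K := c.spec.choose_spec.choose_spec.2.2.1
lemma K_lower (c : MCU X) : IsLowerSet c.K := c.spec.choose_spec.choose_spec.2.2.2.1
lemma C_subset_V (c : MCU X) : c.C ⊆ c.V := c.spec.choose_spec.choose_spec.2.2.2.2.1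
lemma V_subset_K (c : MCU X) : c.V ⊆ c.K := c.spec.choose_spec.choose_spec.2.2.2.2.2.1
lemma K_subset_U (c : MCU X) : c.K ⊆ c.U := c.spec.choose_spec.choose_spec.2.2.2.2.2.2

noncomputable def left (c : MCU X) : MCU X where
  C := c.C
  U := c.V
  closed_C := c.closed_C
  lower_C := c.lower_C
  open_U := c.V_open
  lower_U := c.V_lower
  subset := c.C_subset_V

noncomputable def right (c : MCU X) : MCU X where
  C := c.K
  U := c.U
  closed_C := c.K_closed
  lower_C := c.K_lower
  open_U := c.open_U
  lower_U := c.lower_U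
  subset := c.K_subset_U

@[simp] theorem right_U (c : MCU X) : c.right.U = c.U := rfl

theorem left_U_subset_right_C (c : MCU X) : c.left.U ⊆ c.right.C := c.V_subset_K

theorem left_U_subset (c : MCU X) : c.left.U ⊆ c.U :=
  Subset.trans c.left_U_subset_right_C c.right.subset

theorem subset_right_C (c : MCU X) : c.C ⊆ c.right.C :=
  Subset.trans c.left.subset c.left_U_subset_right_C

/-- `n`-th approximation. -/
noncomputable def approx : ℕ → MCU X → X → ℝ
  | 0, c, x => indicator c.Uᶜ 1 x
  | n + 1, c, x => midpoint ℝ (approx n c.left x) (approx n c.right x)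

theorem approx_of_mem_C (c : MCU X) (n : ℕ) {x : X} (hx : x ∈ c.C) : c.approx n x = 0 := by
  induction n generalizing c with
  | zero => exact indicator_of_notMem (fun (hU : x ∈ c.Uᶜ) => hU <| c.subset hx) _
  | succ n ihn =>
    simp only [approx]
    rw [ihn, ihn, midpoint_self]
    exacts [c.subset_right_C hx, hx]

theorem approx_of_nmem_U (c : MCU X) (n : ℕ) {x : X} (hx : x ∉ c.U) : c.approx n x = 1 := by
  induction n generalizing c with
  | zero =>
    rw [← mem_compl_iff] at hx
    exact indicator_of_mem hx _
  | succ n ihn =>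
    simp only [approx]
    rw [ihn, ihn, midpoint_self]
    exacts [hx, fun hU => hx <| c.left_U_subset hU]

theorem approx_nonneg (c : MCU X) (n : ℕ) (x : X) : 0 ≤ c.approx n x := by
  induction n generalizing c with
  | zero => exact indicator_nonneg (fun _ _ => zero_le_one) _
  | succ n ihn =>
    simp only [approx, midpoint_eq_smul_add, invOf_eq_inv]
    refine mul_nonneg (inv_nonneg.2 zero_le_two) (add_nonneg ?_ ?_) <;> apply ihn

theorem approx_le_one (c : MCU X) (n : ℕ) (x : X) : c.approx n x ≤ 1 := by
  induction n generalizing c with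
  | zero => exact indicator_apply_le' (fun _ => le_rfl) fun _ => zero_le_one
  | succ n ihn =>
    simp only [approx, midpoint_eq_smul_add, invOf_eq_inv, smul_eq_mul, ← div_eq_inv_mul]
    have := add_le_add (ihn (left c)) (ihn (right c))
    norm_num at this
    exact Iff.mpr (div_le_one zero_lt_two) this

theorem bddAbove_range_approx (c : MCU X) (x : X) : BddAbove (range fun n => c.approx n x) :=
  ⟨1, fun _ ⟨n, hn⟩ => hn ▸ c.approx_le_one n x⟩

theorem approx_le_approx_of_U_sub_C {c₁ c₂ : MCU X} (h : c₁.U ⊆ c₂.C) (n₁ n₂ : ℕ) (x : X) :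
    c₂.approx n₂ x ≤ c₁.approx n₁ x := by
  by_cases hx : x ∈ c₁.U
  · calc
      approx n₂ c₂ x = 0 := approx_of_mem_C _ _ (h hx)
      _ ≤ approx n₁ c₁ x := approx_nonneg _ _ _
  · calc
      approx n₂ c₂ x ≤ 1 := approx_le_one _ _ _
      _ = approx n₁ c₁ x := (approx_of_nmem_U _ _ hx).symm

theorem approx_mem_Icc_right_left (c : MCU X) (n : ℕ) (x : X) :
    c.approx n x ∈ Icc (c.right.approx n x) (c.left.approx n x) := by
  induction' n with n ihn generalizing c
  · exact ⟨le_rfl, indicator_le_indicator_of_subset (compl_subset_compl.2 c.left_U_subset)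
      (fun _ => zero_le_one) _⟩
  · simp only [approx, mem_Icc]
    refine ⟨midpoint_le_midpoint ?_ (ihn _).1, midpoint_le_midpoint (ihn _).2 ?_⟩ <;>
      apply approx_le_approx_of_U_sub_C
    exacts [left_U_subset_right_C _, left_U_subset_right_C _]

theorem approx_le_succ (c : MCU X) (n : ℕ) (x : X) : c.approx n x ≤ c.approx (n + 1) x := by
  induction' n with n ihn generalizing c
  · simp only [approx, right_U, right_le_midpoint]
    exact (approx_mem_Icc_right_left c 0 x).2
  · rw [approx, approx]
    exact midpoint_le_midpoint (ihn _) (ihn _)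

theorem approx_mono (c : MCU X) (x : X) : Monotone fun n => c.approx n x :=
  monotone_nat_of_le_succ fun n => c.approx_le_succ n x

/-- The approximations are monotone in the space variable. -/
theorem approx_monotone (n : ℕ) (c : MCU X) : Monotone (c.approx n) := by
  induction n generalizing c with
  | zero =>
    intro a b hab
    simp only [approx]
    by_cases ha : a ∈ c.Uᶜ
    · rw [indicator_of_mem ha, indicator_of_mem (c.lower_U.compl hab ha)]
      exact le_rfl
    · rw [indicator_of_notMem ha]
      exact indicator_nonneg (fun _ _ => zero_le_one) _
  | succ n ihn =>
    intro a b hab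
    simp only [approx]
    exact midpoint_le_midpoint (ihn c.left hab) (ihn c.right hab)

protected noncomputable def lim (c : MCU X) (x : X) : ℝ :=
  ⨆ n, c.approx n x

theorem tendsto_approx_atTop (c : MCU X) (x : X) :
    Filter.Tendsto (fun n => c.approx n x) Filter.atTop (nhds <| c.lim x) :=
  tendsto_atTop_ciSup (c.approx_mono x) ⟨1, fun _ ⟨_, hn⟩ => hn ▸ c.approx_le_one _ _⟩

theorem lim_of_mem_C (c : MCU X) (x : X) (h : x ∈ c.C) : c.lim x = 0 := by
  simp only [MCU.lim, approx_of_mem_C, h, ciSup_const]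

theorem lim_of_nmem_U (c : MCU X) (x : X) (h : x ∉ c.U) : c.lim x = 1 := by
  simp only [MCU.lim, approx_of_nmem_U c _ h, ciSup_const]

theorem lim_eq_midpoint (c : MCU X) (x : X) :
    c.lim x = midpoint ℝ (c.left.lim x) (c.right.lim x) := by
  refine tendsto_nhds_unique (c.tendsto_approx_atTop x) ((Filter.tendsto_add_atTop_iff_nat 1).1 ?_)
  simp only [approx]
  exact (c.left.tendsto_approx_atTop x).midpoint (c.right.tendsto_approx_atTop x)

theorem approx_le_lim (c : MCU X) (x : X) (n : ℕ) : c.approx n x ≤ c.lim x :=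
  le_ciSup (c.bddAbove_range_approx x) _

theorem lim_nonneg (c : MCU X) (x : X) : 0 ≤ c.lim x :=
  (c.approx_nonneg 0 x).trans (c.approx_le_lim x 0)

theorem lim_le_one (c : MCU X) (x : X) : c.lim x ≤ 1 :=
  ciSup_le fun _ => c.approx_le_one _ _

theorem lim_mem_Icc (c : MCU X) (x : X) : c.lim x ∈ Icc (0 : ℝ) 1 :=
  ⟨c.lim_nonneg x, c.lim_le_one x⟩

theorem lim_monotone (c : MCU X) : Monotone c.lim := fun a b hab =>
  ciSup_le fun n => (approx_monotone n c hab).trans (c.approx_le_lim b n)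

theorem continuous_lim (c : MCU X) : Continuous c.lim := by
  obtain ⟨h0, h1234, h1⟩ : 0 < (2⁻¹ : ℝ) ∧ (2⁻¹ : ℝ) < 3 / 4 ∧ (3 / 4 : ℝ) < 1 := by norm_num
  refine
    continuous_iff_continuousAt.2 fun x =>
      (Metric.nhds_basis_closedBall_pow (h0.trans h1234) h1).tendsto_right_iff.2 fun n _ => ?_
  simp only [Metric.mem_closedBall]
  induction' n with n ihn generalizing c
  · filter_upwards with y
    rw [pow_zero]
    exact Real.dist_le_of_mem_Icc_01 (c.lim_mem_Icc _) (c.lim_mem_Icc _)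
  · by_cases hxl : x ∈ c.left.U
    · filter_upwards [IsOpen.mem_nhds c.left.open_U hxl, ihn c.left] with _ hyl hyd
      rw [pow_succ', c.lim_eq_midpoint, c.lim_eq_midpoint,
        c.right.lim_of_mem_C _ (c.left_U_subset_right_C hyl),
        c.right.lim_of_mem_C _ (c.left_U_subset_right_C hxl)]
      refine (dist_midpoint_midpoint_le _ _ _ _).trans ?_
      rw [dist_self, add_zero, div_eq_inv_mul]
      gcongr
    · replace hxl : x ∈ c.left.right.Cᶜ :=
        compl_subset_compl.2 c.left.right.subset hxl
      filter_upwards [IsOpen.mem_nhds (isOpen_compl_iff.2 c.left.right.closed_C) hxl,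
        ihn c.left.right, ihn c.right] with y hyl hydl hydr
      replace hxl : x ∉ c.left.left.U :=
        compl_subset_compl.2 c.left.left_U_subset_right_C hxl
      replace hyl : y ∉ c.left.left.U :=
        compl_subset_compl.2 c.left.left_U_subset_right_C hyl
      simp only [pow_succ, c.lim_eq_midpoint, c.left.lim_eq_midpoint,
        c.left.left.lim_of_nmem_U _ hxl, c.left.left.lim_of_nmem_U _ hyl]
      refine (dist_midpoint_midpoint_le _ _ _ _).trans ?_
      refine (div_le_div_of_nonneg_right (add_le_add_left (dist_midpoint_midpoint_le _ _ _ _) _)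
        zero_le_two).trans ?_
      rw [dist_self, zero_add]
      set r := (3 / 4 : ℝ) ^ n
      calc _ ≤ (r / 2 + r) / 2 := by gcongr
        _ = _ := by field_simp; ring

end MCU

end NachbinAux

/-- Nachbin's order-separation theorem: if `¬ x ≤ y` in a compact ordered space, then
some continuous monotone `f : X → [0,1]` has `f x = 1` and `f y = 0`. -/
theorem nachbin_separation {X : Type*} [TopologicalSpace X] [CompactSpace X]
    [PartialOrder X] [OrderClosedTopology X] {x y : X} (h : ¬ x ≤ y) :
    ∃ f : X → unitInterval, Continuous f ∧ Monotone f ∧ f x = 1 ∧ f y = 0 := by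
  have hd : Disjoint (Set.Ici x) (Set.Iic y) :=
    Set.disjoint_left.2 fun z hz hz' => h (le_trans hz hz')
  obtain ⟨U, V, hUo, hUu, hVo, hVl, hxU, hyV, hUV⟩ :=
    NachbinAux.sep_upper_lower isClosed_Ici (isUpperSet_Ici x) isClosed_Iic
      (isLowerSet_Iic y) hd
  set c : NachbinAux.MCU X :=
    { C := Set.Iic y
      U := V
      closed_C := isClosed_Iic
      lower_C := isLowerSet_Iic y
      open_U := hVo
      lower_U := hVl
      subset := hyV }
  have hxV : x ∉ V := fun hx => (Set.disjoint_left.1 hUV) (hxU le_rfl) hx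
  refine ⟨fun z => ⟨c.lim z, c.lim_mem_Icc z⟩, ?_, ?_, ?_, ?_⟩
  · exact c.continuous_lim.subtype_mk _
  · intro a b hab
    exact Subtype.mk_le_mk.2 (c.lim_monotone hab)
  · exact Subtype.ext (c.lim_of_nmem_U x hxV)
  · exact Subtype.ext (c.lim_of_mem_C y le_rfl)
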